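/- Work in ℝ^d with A : ℝ^d → ℝ^d continuous linear, ‖A‖ ≤ C_M, and V : ℝ^d → ℝ three times continuously differentiable with ‖∇V(z)‖ ≤ G₁, ‖D²V(z)‖ ≤ G₂ and ‖D³V(z)‖ ≤ G₃ for all z ∈ ℝ^d. Fix constants α₂, β₂, C_α, C_β, R and leapfrog parameters α = 1 + α₂·δt² + α̃(δt), β = 1 + β₂·δt² + β̃(δt) with |α̃(δt)| ≤ C_α·δt³, |β̃(δt)| ≤ C_β·δt³ (the case α₁ = β₁ = 0). Then there exists a constant C, depending only on R, C_M, C_α, C_β, α₂, β₂, G₁, G₂, G₃, with the following property: for every δt ∈ (0,1], every t₀ ∈ ℝ, every y₀, x₀ ∈ ℝ^d with ‖y₀‖ ≤ R, ‖x₀‖ ≤ R, and every pair of differentiable curves y, x : [t₀, t₀ + δt] → ℝ^d with y(t₀) = y₀, x(t₀) = x₀, y'(t) = A·x(t), x'(t) = −∇V(y(t)) and ‖x(t)‖ ≤ R on [t₀, t₀ + δt], the local truncation errors of the scheme satisfy ‖(y(t₀ + δt) − y⁺) + β₂·δt²·y₀‖ ≤ C·δt³ and ‖(x(t₀ + δt)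 − x⁺) + 2α₂·δt²·x₀‖ ≤ C·δt³, where (y⁺, x⁺) is one step of the parameterized leapfrog scheme from (y₀, x₀). -/

import Mathlib

open Set

section Aux
variable {E : Type*} [NormedAddCommGroup E] [NormedSpace ℝ E]
variable {F : Type*} [NormedAddCommGroup F] [NormedSpace ℝ F]

lemma mv_icc {f f' : ℝ → E} {a b C : ℝ}
    (hf : ∀ t ∈ Icc a b, HasDerivAt f (f' t) t)
    (hb : ∀ t ∈ Icc a b, ‖f' t‖ ≤ C) {t : ℝ} (ht : t ∈ Icc a b) :
    ‖f t - f a‖ ≤ C * (t - a) := by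
  have ha : a ∈ Icc a b := ⟨le_refl a, ht.1.trans ht.2⟩
  have h := Convex.norm_image_sub_le_of_norm_hasDerivWithin_le
    (f' := f') (fun s hs => (hf s hs).hasDerivWithinAt) hb (convex_Icc a b) ha ht
  rwa [Real.norm_eq_abs, abs_of_nonneg (sub_nonneg.2 ht.1)] at h
end Aux


private lemma lip_of_fderiv' {E : Type*} [NormedAddCommGroup E] [NormedSpace ℝ E]
    {F : Type*} [NormedAddCommGroup F] [NormedSpace ℝ F]
    {f : E → F} {f' : E → E →L[ℝ] F} {L : ℝ}
    (hf : ∀ z, HasFDerivAt f (f' z) z) (hb : ∀ z, ‖f' z‖ ≤ L) (a b : E) :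
    ‖f b - f a‖ ≤ L * ‖b - a‖ :=
  Convex.norm_image_sub_le_of_norm_hasFDerivWithin_le
    (fun z _ => (hf z).hasFDerivWithinAt) (fun z _ => hb z) convex_univ trivial trivial

private lemma taylor_of_lip {E : Type*} [NormedAddCommGroup E] [NormedSpace ℝ E]
    {F : Type*} [NormedAddCommGroup F] [NormedSpace ℝ F]
    {f : E → F} {f' : E → E →L[ℝ] F} {L : ℝ} (hL0 : 0 ≤ L)
    (hf : ∀ z, HasFDerivAt f (f' z) z)
    (hlip : ∀ z w, ‖f' z - f' w‖ ≤ L * ‖z - w‖) (a b : E) :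
    ‖f b - f a - f' a (b - a)‖ ≤ L * ‖b - a‖ * ‖b - a‖ := by
  refine Convex.norm_image_sub_le_of_norm_hasFDerivWithin_le'
    (fun z _ => (hf z).hasFDerivWithinAt) (fun z hz => ?_) (convex_segment a b)
    (left_mem_segment ℝ a b) (right_mem_segment ℝ a b)
  have hz' : ‖z - a‖ ≤ ‖b - a‖ := by
    obtain ⟨u, v, hu, hv, huv, rfl⟩ := hz
    have h : u • a + v • b - a = v • (b - a) := by
      have : u = 1 - v := by linarith
      subst this; module
    rw [h, norm_smul, Real.norm_eq_abs, abs_of_nonneg hv]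
    nlinarith [norm_nonneg (b - a)]
  calc ‖f' z - f' a‖ ≤ L * ‖z - a‖ := hlip z a
    _ ≤ L * ‖b - a‖ := mul_le_mul_of_nonneg_left hz' hL0

set_option maxHeartbeats 16000000 in
/-- Pathwise local truncation error estimate for the parameterized leapfrog scheme
with `α₁ = β₁ = 0`: comparing one scheme step from `(y₀, x₀)` with the exact
Hamiltonian flow from the same initial data, the dominant error terms are
`−β₂·δt²·y₀` in position and `−2α₂·δt²·x₀` in momentum, with remainder of order
`δt³` controlled by a constant depending only on
`R, C_M, C_α, C_β, α₂, β₂, G₁, G₂, G₃`. -/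
theorem stmt13
    (d : ℕ) (hd : 1 ≤ d)
    (A : EuclideanSpace ℝ (Fin d) →L[ℝ] EuclideanSpace ℝ (Fin d))
    (C_M : ℝ) (hA : ‖A‖ ≤ C_M)
    (V : EuclideanSpace ℝ (Fin d) → ℝ) (hV : ContDiff ℝ 3 V)
    (G₁ G₂ G₃ : ℝ)
    (hG₁ : ∀ z, ‖gradient V z‖ ≤ G₁)
    (hG₂ : ∀ z, ‖fderiv ℝ (gradient V) z‖ ≤ G₂)
    (hG₃ : ∀ z, ‖fderiv ℝ (fderiv ℝ (gradient V)) z‖ ≤ G₃)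
    (α₂ β₂ C_α C_β R : ℝ) :
    ∃ C : ℝ, ∀ δt : ℝ, 0 < δt → δt ≤ 1 → ∀ t₀ : ℝ,
      ∀ αt βt : ℝ, |αt| ≤ C_α * δt ^ 3 → |βt| ≤ C_β * δt ^ 3 →
      ∀ y₀ x₀ : EuclideanSpace ℝ (Fin d), ‖y₀‖ ≤ R → ‖x₀‖ ≤ R →
      ∀ y x : ℝ → EuclideanSpace ℝ (Fin d), y t₀ = y₀ → x t₀ = x₀ →
      (∀ t ∈ Set.Icc t₀ (t₀ + δt), HasDerivAt y (A (x t)) t) →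
      (∀ t ∈ Set.Icc t₀ (t₀ + δt), HasDerivAt x (-gradient V (y t)) t) →
      (∀ t ∈ Set.Icc t₀ (t₀ + δt), ‖x t‖ ≤ R) →
      ‖(y (t₀ + δt) - ((1 + β₂ * δt ^ 2 + βt) • y₀
            + δt • A ((1 + α₂ * δt ^ 2 + αt) • x₀ - (δt / 2) • gradient V y₀)))
          + (β₂ * δt ^ 2) • y₀‖ ≤ C * δt ^ 3 ∧
      ‖(x (t₀ + δt) - ((1 + α₂ * δt ^ 2 + αt) ^ 2 • x₀
            - (δt / 2) • ((1 + α₂ * δt ^ 2 + αt) • gradient V y₀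
              + gradient V ((1 + β₂ * δt ^ 2 + βt) • y₀
                + δt • A ((1 + α₂ * δt ^ 2 + αt) • x₀ - (δt / 2) • gradient V y₀)))))
          + (2 * α₂ * δt ^ 2) • x₀‖ ≤ C * δt ^ 3 := by
  have hCm : 0 ≤ C_M := (norm_nonneg A).trans hA
  have hg1 : 0 ≤ G₁ := (norm_nonneg _).trans (hG₁ 0)
  have hg2 : 0 ≤ G₂ := (norm_nonneg _).trans (hG₂ 0)
  have hg3 : 0 ≤ G₃ := (ContinuousLinearMap.opNorm_nonneg _).trans (hG₃ 0)
  -- smoothness of the gradient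
  have hgradC : ContDiff ℝ 2 (gradient V) := by
    have h1 : ContDiff ℝ 2 (fderiv ℝ V) := hV.fderiv_right (by norm_num)
    have h2 : gradient V = fun z =>
        (InnerProductSpace.toDual ℝ (EuclideanSpace ℝ (Fin d))).symm (fderiv ℝ V z) := rfl
    rw [h2]
    exact ((InnerProductSpace.toDual ℝ _).symm.contDiff).comp h1
  have hgradD : ∀ z, HasFDerivAt (gradient V) (fderiv ℝ (gradient V) z) z := fun z =>
    (hgradC.differentiable (by norm_num) z).hasFDerivAt
  have hgrad2C : ContDiff ℝ 1 (fderiv ℝ (gradient V)) := hgradC.fderiv_right (by norm_num)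
  have hBD : ∀ z, HasFDerivAt (fderiv ℝ (gradient V))
      (fderiv ℝ (fderiv ℝ (gradient V)) z) z := fun z =>
    (hgrad2C.differentiable one_ne_zero z).hasFDerivAt
  have lipg : ∀ a b : EuclideanSpace ℝ (Fin d),
      ‖gradient V b - gradient V a‖ ≤ G₂ * ‖b - a‖ := lip_of_fderiv' hgradD hG₂
  have lipB : ∀ a b : EuclideanSpace ℝ (Fin d),
      ‖fderiv ℝ (gradient V) a - fderiv ℝ (gradient V) b‖ ≤ G₃ * ‖a - b‖ := fun a b =>
    lip_of_fderiv' hBD hG₃ b a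
  have tay : ∀ a b : EuclideanSpace ℝ (Fin d),
      ‖gradient V b - gradient V a - (fderiv ℝ (gradient V) a) (b - a)‖
        ≤ G₃ * ‖b - a‖ * ‖b - a‖ := taylor_of_lip hg3 hgradD lipB
  -- the constants
  set P : ℝ := |α₂| + |C_α| with hPdef
  set Q : ℝ := |β₂| + |C_β| with hQdef
  set W : ℝ := Q * |R| + P * (C_M * |R|) + C_M * G₁ / 2 with hWdef
  set K1 : ℝ := C_M ^ 2 * G₂ * |R| + |C_β| * |R| + P * (C_M * |R|) with hK1def
  set K2 : ℝ := (G₃ * C_M ^ 2 * |R| ^ 2 + G₂ * C_M * G₁) + (2 * |C_α| + P ^ 2) * |R|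
      + (P * G₁ + G₂ * W + G₃ * (C_M * |R| + W) ^ 2) / 2 with hK2def
  clear_value P Q W K1 K2
  have hPnn : 0 ≤ P := by rw [hPdef]; positivity
  have hQnn : 0 ≤ Q := by rw [hQdef]; positivity
  have hWnn : 0 ≤ W := by
    rw [hWdef]
    have := mul_nonneg hQnn (abs_nonneg R)
    have := mul_nonneg hPnn (mul_nonneg hCm (abs_nonneg R))
    have := mul_nonneg hCm hg1
    linarith
  have hK1nn : 0 ≤ K1 := by
    rw [hK1def]
    have := mul_nonneg (mul_nonneg (sq_nonneg C_M) hg2) (abs_nonneg R)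
    have := mul_nonneg (abs_nonneg C_β) (abs_nonneg R)
    have := mul_nonneg hPnn (mul_nonneg hCm (abs_nonneg R))
    linarith
  have hK2nn : 0 ≤ K2 := by
    rw [hK2def]
    have h1 := mul_nonneg (mul_nonneg hg3 (sq_nonneg C_M)) (sq_nonneg |R|)
    have h2 := mul_nonneg (mul_nonneg hg2 hCm) hg1
    have h3 := mul_nonneg (by positivity : (0:ℝ) ≤ 2 * |C_α| + P ^ 2) (abs_nonneg R)
    have h4 := mul_nonneg hPnn hg1
    have h5 := mul_nonneg hg2 hWnn
    have h6 := mul_nonneg hg3 (sq_nonneg (C_M * |R| + W))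
    linarith
  refine ⟨K1 + K2, ?_⟩
  intro δt hδ hδ1 t₀ αt βt hαt hβt y₀ x₀ hy₀R hx₀R y x hy0 hx0 hyd hxd hxR
  have hRnn : 0 ≤ R := (norm_nonneg _).trans hy₀R
  have hT : t₀ ≤ t₀ + δt := by linarith
  have hRA : R ≤ |R| := le_abs_self R
  have hy₀R' : ‖y₀‖ ≤ |R| := hy₀R.trans hRA
  have hx₀R' : ‖x₀‖ ≤ |R| := hx₀R.trans hRA
  have hαt' : |αt| ≤ |C_α| * δt ^ 3 :=
    hαt.trans (mul_le_mul_of_nonneg_right (le_abs_self _) (by positivity))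
  have hβt' : |βt| ≤ |C_β| * δt ^ 3 :=
    hβt.trans (mul_le_mul_of_nonneg_right (le_abs_self _) (by positivity))
  have hδ32 : δt ^ 3 ≤ δt ^ 2 := by nlinarith
  have hs1 : |α₂ * δt ^ 2 + αt| ≤ P * δt ^ 2 := by
    rw [hPdef]
    calc |α₂ * δt ^ 2 + αt| ≤ |α₂ * δt ^ 2| + |αt| := abs_add_le _ _
      _ = |α₂| * δt ^ 2 + |αt| := by
          rw [abs_mul, abs_of_nonneg (by positivity : (0:ℝ) ≤ δt ^ 2)]
      _ ≤ |α₂| * δt ^ 2 + |C_α| * δt ^ 3 := by linarith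
      _ ≤ (|α₂| + |C_α|) * δt ^ 2 := by nlinarith [abs_nonneg C_α]
  have hs2 : |β₂ * δt ^ 2 + βt| ≤ Q * δt ^ 2 := by
    rw [hQdef]
    calc |β₂ * δt ^ 2 + βt| ≤ |β₂ * δt ^ 2| + |βt| := abs_add_le _ _
      _ = |β₂| * δt ^ 2 + |βt| := by
          rw [abs_mul, abs_of_nonneg (by positivity : (0:ℝ) ≤ δt ^ 2)]
      _ ≤ |β₂| * δt ^ 2 + |C_β| * δt ^ 3 := by linarith
      _ ≤ (|β₂| + |C_β|) * δt ^ 2 := by nlinarith [abs_nonneg C_β]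
  have hAx : ‖A x₀‖ ≤ C_M * |R| :=
    (A.le_opNorm x₀).trans (mul_le_mul hA hx₀R' (norm_nonneg _) hCm)
  have hAg : ‖A (gradient V y₀)‖ ≤ C_M * G₁ :=
    (A.le_opNorm _).trans (mul_le_mul hA (hG₁ y₀) (norm_nonneg _) hCm)
  -- Lipschitz bound for y
  have hylip : ∀ t ∈ Icc t₀ (t₀ + δt), ‖y t - y₀‖ ≤ C_M * R * δt := by
    intro t ht
    have h := mv_icc hyd (fun s hs =>
      (A.le_opNorm (x s)).trans (mul_le_mul hA (hxR s hs) (norm_nonneg _) hCm)) ht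
    rw [hy0] at h
    refine h.trans ?_
    have h2 : t - t₀ ≤ δt := by linarith [ht.2]
    nlinarith [mul_nonneg hCm hRnn, sub_nonneg.2 ht.1]
  -- Lipschitz bound for x
  have hxlip : ∀ t ∈ Icc t₀ (t₀ + δt), ‖x t - x₀‖ ≤ G₁ * δt := by
    intro t ht
    have h := mv_icc hxd (fun s hs => by
      rw [norm_neg]; exact hG₁ (y s)) ht
    rw [hx0] at h
    refine h.trans ?_
    have h2 : t - t₀ ≤ δt := by linarith [ht.2]
    nlinarith [sub_nonneg.2 ht.1]
  -- second-order bound for x deviation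
  have hu : ∀ t ∈ Icc t₀ (t₀ + δt),
      ‖x t - x₀ + (t - t₀) • gradient V y₀‖ ≤ (G₂ * (C_M * R * δt)) * δt := by
    intro t ht
    have hf : ∀ s ∈ Icc t₀ (t₀ + δt), HasDerivAt
        (fun s => x s - x₀ + (s - t₀) • gradient V y₀)
        (-gradient V (y s) + gradient V y₀) s := by
      intro s hs
      have h1 := ((hxd s hs).sub_const x₀).add
        (((hasDerivAt_id s).sub_const t₀).smul_const (gradient V y₀))
      simpa [Pi.add_def] using h1
    have hb : ∀ s ∈ Icc t₀ (t₀ + δt),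
        ‖-gradient V (y s) + gradient V y₀‖ ≤ G₂ * (C_M * R * δt) := by
      intro s hs
      have h1 : ‖-gradient V (y s) + gradient V y₀‖ = ‖gradient V y₀ - gradient V (y s)‖ := by
        rw [neg_add_eq_sub]
      rw [h1]
      refine (lipg (y s) y₀).trans ?_
      rw [norm_sub_rev]
      exact mul_le_mul_of_nonneg_left (hylip s hs) hg2
    have h := mv_icc hf hb ht
    have h0 : x t₀ - x₀ + (t₀ - t₀) • gradient V y₀ = 0 := by simp [hx0]
    rw [h0, sub_zero] at h
    refine h.trans ?_
    have h2 : t - t₀ ≤ δt := by linarith [ht.2]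
    nlinarith [mul_nonneg (mul_nonneg hg2 (mul_nonneg (mul_nonneg hCm hRnn) hδ.le)) (sub_nonneg.2 ht.1), sub_nonneg.2 ht.1, mul_nonneg hg2 (mul_nonneg (mul_nonneg hCm hRnn) hδ.le)]
  -- second-order bound for y deviation
  have hp : ∀ t ∈ Icc t₀ (t₀ + δt),
      ‖y t - y₀ - (t - t₀) • A x₀‖ ≤ (C_M * (G₁ * δt)) * δt := by
    intro t ht
    have hf : ∀ s ∈ Icc t₀ (t₀ + δt), HasDerivAt
        (fun s => y s - y₀ - (s - t₀) • A x₀) (A (x s - x₀)) s := by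
      intro s hs
      have h1 := ((hyd s hs).sub_const y₀).sub
        (((hasDerivAt_id s).sub_const t₀).smul_const (A x₀))
      have h2 : A (x s - x₀) = A (x s) - (1:ℝ) • A x₀ := by simp [map_sub]
      rw [h2]; exact h1
    have hb : ∀ s ∈ Icc t₀ (t₀ + δt), ‖A (x s - x₀)‖ ≤ C_M * (G₁ * δt) := fun s hs =>
      (A.le_opNorm _).trans (mul_le_mul hA (hxlip s hs) (norm_nonneg _) hCm)
    have h := mv_icc hf hb ht
    have h0 : y t₀ - y₀ - (t₀ - t₀) • A x₀ = 0 := by simp [hy0]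
    rw [h0, sub_zero] at h
    refine h.trans ?_
    have h2 : t - t₀ ≤ δt := by linarith [ht.2]
    nlinarith [mul_nonneg hCm (mul_nonneg hg1 hδ.le), sub_nonneg.2 ht.1]
  -- third-order expansion of y
  have hE1 : ‖y (t₀ + δt) - y₀ - δt • A x₀ + (δt ^ 2 / 2) • A (gradient V y₀)‖
      ≤ (C_M * ((G₂ * (C_M * R * δt)) * δt)) * δt := by
    have hf : ∀ s ∈ Icc t₀ (t₀ + δt), HasDerivAt
        (fun s => y s - y₀ - (s - t₀) • A x₀ + ((s - t₀) ^ 2 / 2) • A (gradient V y₀))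
        (A (x s - x₀ + (s - t₀) • gradient V y₀)) s := by
      intro s hs
      have hq : HasDerivAt (fun s => (s - t₀) ^ 2 / 2) (s - t₀) s := by
        have h1 := (((hasDerivAt_id s).sub_const t₀).pow 2).div_const 2
        refine h1.congr_deriv ?_
        simp [id_eq]
      have h1 := (((hyd s hs).sub_const y₀).sub
        (((hasDerivAt_id s).sub_const t₀).smul_const (A x₀))).add
        (hq.smul_const (A (gradient V y₀)))
      have h2 : A (x s - x₀ + (s - t₀) • gradient V y₀)
          = A (x s) - (1:ℝ) • A x₀ + (s - t₀) • A (gradient V y₀) := by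
        simp [map_add, map_sub, map_smul]
      rw [h2]; exact h1
    have hb : ∀ s ∈ Icc t₀ (t₀ + δt), ‖A (x s - x₀ + (s - t₀) • gradient V y₀)‖
        ≤ C_M * ((G₂ * (C_M * R * δt)) * δt) := fun s hs =>
      (A.le_opNorm _).trans (mul_le_mul hA (hu s hs) (norm_nonneg _) hCm)
    have h := mv_icc hf hb ⟨hT, le_refl _⟩
    have h0 : y t₀ - y₀ - (t₀ - t₀) • A x₀ + ((t₀ - t₀) ^ 2 / 2) • A (gradient V y₀) = 0 := by
      simp [hy0]
    rw [h0, sub_zero, add_sub_cancel_left] at h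
    simpa using h
  -- third-order expansion of x
  have hE2 : ‖x (t₀ + δt) - x₀ + δt • gradient V y₀
        + (δt ^ 2 / 2) • (fderiv ℝ (gradient V) y₀) (A x₀)‖
      ≤ (G₃ * (C_M * R * δt) * (C_M * R * δt) + G₂ * ((C_M * (G₁ * δt)) * δt)) * δt := by
    have hf : ∀ s ∈ Icc t₀ (t₀ + δt), HasDerivAt
        (fun s => x s - x₀ + (s - t₀) • gradient V y₀
          + ((s - t₀) ^ 2 / 2) • (fderiv ℝ (gradient V) y₀) (A x₀))
        (-(gradient V (y s) - gradient V y₀ - (fderiv ℝ (gradient V) y₀) (y s - y₀))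
          - (fderiv ℝ (gradient V) y₀) (y s - y₀ - (s - t₀) • A x₀)) s := by
      intro s hs
      have hq : HasDerivAt (fun s => (s - t₀) ^ 2 / 2) (s - t₀) s := by
        have h1 := (((hasDerivAt_id s).sub_const t₀).pow 2).div_const 2
        refine h1.congr_deriv ?_
        simp [id_eq]
      have h1 := (((hxd s hs).sub_const x₀).add
        (((hasDerivAt_id s).sub_const t₀).smul_const (gradient V y₀))).add
        (hq.smul_const ((fderiv ℝ (gradient V) y₀) (A x₀)))
      have h2 : -(gradient V (y s) - gradient V y₀ - (fderiv ℝ (gradient V) y₀) (y s - y₀))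
          - (fderiv ℝ (gradient V) y₀) (y s - y₀ - (s - t₀) • A x₀)
          = -gradient V (y s) + (1:ℝ) • gradient V y₀
            + (s - t₀) • (fderiv ℝ (gradient V) y₀) (A x₀) := by
        simp only [map_sub, map_smul, one_smul]
        abel
      rw [h2]; exact h1
    have hb : ∀ s ∈ Icc t₀ (t₀ + δt),
        ‖-(gradient V (y s) - gradient V y₀ - (fderiv ℝ (gradient V) y₀) (y s - y₀))
          - (fderiv ℝ (gradient V) y₀) (y s - y₀ - (s - t₀) • A x₀)‖
        ≤ G₃ * (C_M * R * δt) * (C_M * R * δt) + G₂ * ((C_M * (G₁ * δt)) * δt) := by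
      intro s hs
      refine (norm_sub_le _ _).trans (add_le_add ?_ ?_)
      · rw [norm_neg]
        refine (tay y₀ (y s)).trans ?_
        have := hylip s hs
        have h0 : (0:ℝ) ≤ C_M * R * δt := by positivity
        rw [mul_assoc, mul_assoc]
        exact mul_le_mul_of_nonneg_left (mul_le_mul this this (norm_nonneg _) h0) hg3
      · exact ((fderiv ℝ (gradient V) y₀).le_opNorm _).trans
          (mul_le_mul (hG₂ y₀) (hp s hs) (norm_nonneg _) hg2)
    have h := mv_icc hf hb ⟨hT, le_refl _⟩
    have h0 : x t₀ - x₀ + (t₀ - t₀) • gradient V y₀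
        + ((t₀ - t₀) ^ 2 / 2) • (fderiv ℝ (gradient V) y₀) (A x₀) = 0 := by simp [hx0]
    rw [h0, sub_zero, add_sub_cancel_left] at h
    simpa using h

    -- common scheme-side bounds
  have by3 : ‖(δt * (α₂ * δt ^ 2 + αt)) • A x₀‖ ≤ P * (C_M * |R|) * δt ^ 3 := by
    rw [norm_smul, Real.norm_eq_abs, abs_mul, abs_of_pos hδ]
    calc δt * |α₂ * δt ^ 2 + αt| * ‖A x₀‖ ≤ δt * (P * δt ^ 2) * (C_M * |R|) := by
          refine mul_le_mul (mul_le_mul_of_nonneg_left hs1 hδ.le) hAx (norm_nonneg _) ?_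
          exact mul_nonneg hδ.le (mul_nonneg hPnn (by positivity))
      _ = P * (C_M * |R|) * δt ^ 3 := by ring
  constructor
  · -- position error
    have idy : y (t₀ + δt) - ((1 + β₂ * δt ^ 2 + βt) • y₀
          + δt • A ((1 + α₂ * δt ^ 2 + αt) • x₀ - (δt / 2) • gradient V y₀))
          + (β₂ * δt ^ 2) • y₀
        = (y (t₀ + δt) - y₀ - δt • A x₀ + (δt ^ 2 / 2) • A (gradient V y₀))
          - βt • y₀ - (δt * (α₂ * δt ^ 2 + αt)) • A x₀ := by
      simp only [map_sub, map_smul]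
      module
    rw [idy]
    have by2 : ‖βt • y₀‖ ≤ |C_β| * |R| * δt ^ 3 := by
      rw [norm_smul, Real.norm_eq_abs]
      calc |βt| * ‖y₀‖ ≤ (|C_β| * δt ^ 3) * |R| :=
            mul_le_mul hβt' hy₀R' (norm_nonneg _) (by positivity)
        _ = |C_β| * |R| * δt ^ 3 := by ring
    have e1' : C_M * (G₂ * (C_M * R * δt) * δt) * δt ≤ C_M ^ 2 * G₂ * |R| * δt ^ 3 := by
      nlinarith [mul_nonneg (mul_nonneg (mul_nonneg hCm hCm) hg2) (sub_nonneg.2 hRA),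
        pow_nonneg hδ.le 3]
    have expand : (K1 + K2) * δt ^ 3 = C_M ^ 2 * G₂ * |R| * δt ^ 3 + |C_β| * |R| * δt ^ 3
        + P * (C_M * |R|) * δt ^ 3 + K2 * δt ^ 3 := by rw [hK1def]; ring
    have hK2t : 0 ≤ K2 * δt ^ 3 := mul_nonneg hK2nn (by positivity)
    refine ((norm_sub_le _ _).trans (add_le_add_left (norm_sub_le _ _) _)).trans ?_
    linarith [hE1, by2, by3]
  · -- momentum error
    have hw : ‖(1 + β₂ * δt ^ 2 + βt) • y₀
                + δt • A ((1 + α₂ * δt ^ 2 + αt) • x₀ - (δt / 2) • gradient V y₀) - y₀ - δt • A x₀‖ ≤ W * δt ^ 2 := by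
      have idw : (1 + β₂ * δt ^ 2 + βt) • y₀
                + δt • A ((1 + α₂ * δt ^ 2 + αt) • x₀ - (δt / 2) • gradient V y₀) - y₀ - δt • A x₀
          = (β₂ * δt ^ 2 + βt) • y₀ + (δt * (α₂ * δt ^ 2 + αt)) • A x₀
            - (δt ^ 2 / 2) • A (gradient V y₀) := by
        simp only [map_sub, map_smul]
        module
      rw [idw]
      have w1 : ‖(β₂ * δt ^ 2 + βt) • y₀‖ ≤ Q * δt ^ 2 * |R| := by
        rw [norm_smul, Real.norm_eq_abs]
        exact mul_le_mul hs2 hy₀R' (norm_nonneg _) (mul_nonneg hQnn (by positivity))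
      have w3 : ‖(δt ^ 2 / 2) • A (gradient V y₀)‖ ≤ δt ^ 2 / 2 * (C_M * G₁) := by
        rw [norm_smul, Real.norm_eq_abs, abs_of_nonneg (by positivity : (0:ℝ) ≤ δt ^ 2 / 2)]
        exact mul_le_mul_of_nonneg_left hAg (by positivity)
      refine ((norm_sub_le _ _).trans (add_le_add_left (norm_add_le _ _) _)).trans ?_
      rw [hWdef]
      nlinarith [w1, by3, w3, mul_nonneg (mul_nonneg hPnn (mul_nonneg hCm (abs_nonneg R)))
        (mul_nonneg (pow_nonneg hδ.le 2) (sub_nonneg.2 hδ1))]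
    have hyp2 : ‖((1 + β₂ * δt ^ 2 + βt) • y₀
                + δt • A ((1 + α₂ * δt ^ 2 + αt) • x₀ - (δt / 2) • gradient V y₀)) - y₀‖ ≤ (C_M * |R| + W) * δt := by
      have h0 : ((1 + β₂ * δt ^ 2 + βt) • y₀
                + δt • A ((1 + α₂ * δt ^ 2 + αt) • x₀ - (δt / 2) • gradient V y₀)) - y₀
          = (((1 + β₂ * δt ^ 2 + βt) • y₀
                + δt • A ((1 + α₂ * δt ^ 2 + αt) • x₀ - (δt / 2) • gradient V y₀)) - y₀ - δt • A x₀) + δt • A x₀ := by abel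
      rw [h0]
      refine (norm_add_le _ _).trans ?_
      have h2 : ‖δt • A x₀‖ ≤ δt * (C_M * |R|) := by
        rw [norm_smul, Real.norm_eq_abs, abs_of_pos hδ]
        exact mul_le_mul_of_nonneg_left hAx hδ.le
      nlinarith [hw, h2, mul_nonneg hWnn (mul_nonneg hδ.le (sub_nonneg.2 hδ1))]
    have hr : ‖gradient V ((1 + β₂ * δt ^ 2 + βt) • y₀
                + δt • A ((1 + α₂ * δt ^ 2 + αt) • x₀ - (δt / 2) • gradient V y₀)) - gradient V y₀
          - (fderiv ℝ (gradient V) y₀) (((1 + β₂ * δt ^ 2 + βt) • y₀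
                + δt • A ((1 + α₂ * δt ^ 2 + αt) • x₀ - (δt / 2) • gradient V y₀)) - y₀)‖
        ≤ G₃ * ((C_M * |R| + W) * δt) * ((C_M * |R| + W) * δt) := by
      refine (tay y₀ _).trans ?_
      rw [mul_assoc, mul_assoc]
      refine mul_le_mul_of_nonneg_left (mul_le_mul hyp2 hyp2 (norm_nonneg _) ?_) hg3
      exact mul_nonneg (add_nonneg (mul_nonneg hCm (abs_nonneg R)) hWnn) hδ.le
    have idx : x (t₀ + δt) - ((1 + α₂ * δt ^ 2 + αt) ^ 2 • x₀
          - (δt / 2) • ((1 + α₂ * δt ^ 2 + αt) • gradient V y₀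
            + gradient V ((1 + β₂ * δt ^ 2 + βt) • y₀
                + δt • A ((1 + α₂ * δt ^ 2 + αt) • x₀ - (δt / 2) • gradient V y₀))))
          + (2 * α₂ * δt ^ 2) • x₀
        = (x (t₀ + δt) - x₀ + δt • gradient V y₀
            + (δt ^ 2 / 2) • (fderiv ℝ (gradient V) y₀) (A x₀))
          - (2 * αt + (α₂ * δt ^ 2 + αt) ^ 2) • x₀
          + ((δt / 2) * (α₂ * δt ^ 2 + αt)) • gradient V y₀
          + (δt / 2) • (fderiv ℝ (gradient V) y₀) (((1 + β₂ * δt ^ 2 + βt) • y₀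
                + δt • A ((1 + α₂ * δt ^ 2 + αt) • x₀ - (δt / 2) • gradient V y₀)) - y₀ - δt • A x₀)
          + (δt / 2) • (gradient V ((1 + β₂ * δt ^ 2 + βt) • y₀
                + δt • A ((1 + α₂ * δt ^ 2 + αt) • x₀ - (δt / 2) • gradient V y₀)) - gradient V y₀
              - (fderiv ℝ (gradient V) y₀) (((1 + β₂ * δt ^ 2 + βt) • y₀
                + δt • A ((1 + α₂ * δt ^ 2 + αt) • x₀ - (δt / 2) • gradient V y₀)) - y₀)) := by
      simp only [map_add, map_sub, map_smul]
      module
    rw [idx]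
    have m1 : ‖x (t₀ + δt) - x₀ + δt • gradient V y₀
          + (δt ^ 2 / 2) • (fderiv ℝ (gradient V) y₀) (A x₀)‖
        ≤ (G₃ * C_M ^ 2 * |R| ^ 2 + G₂ * C_M * G₁) * δt ^ 3 :=
      hE2.trans (le_of_eq (by rw [sq_abs R]; ring))
    have m2 : ‖(2 * αt + (α₂ * δt ^ 2 + αt) ^ 2) • x₀‖
        ≤ (2 * |C_α| + P ^ 2) * |R| * δt ^ 3 := by
      rw [norm_smul, Real.norm_eq_abs]
      have hsq : (α₂ * δt ^ 2 + αt) ^ 2 ≤ P ^ 2 * δt ^ 4 := by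
        nlinarith [sq_abs (α₂ * δt ^ 2 + αt),
          mul_le_mul hs1 hs1 (abs_nonneg _) (mul_nonneg hPnn (by positivity))]
      have h2 : |2 * αt + (α₂ * δt ^ 2 + αt) ^ 2| ≤ 2 * (|C_α| * δt ^ 3) + P ^ 2 * δt ^ 4 := by
        refine (abs_add_le _ _).trans ?_
        rw [abs_mul, abs_of_nonneg (by norm_num : (0:ℝ) ≤ (2:ℝ)),
          abs_of_nonneg (sq_nonneg (α₂ * δt ^ 2 + αt))]
        linarith
      calc |2 * αt + (α₂ * δt ^ 2 + αt) ^ 2| * ‖x₀‖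
          ≤ (2 * (|C_α| * δt ^ 3) + P ^ 2 * δt ^ 4) * |R| :=
            mul_le_mul h2 hx₀R' (norm_nonneg _) (by positivity)
        _ ≤ (2 * |C_α| + P ^ 2) * |R| * δt ^ 3 := by
            nlinarith [mul_nonneg (mul_nonneg (sq_nonneg P) (abs_nonneg R))
              (mul_nonneg (pow_nonneg hδ.le 3) (sub_nonneg.2 hδ1))]
    have m3 : ‖((δt / 2) * (α₂ * δt ^ 2 + αt)) • gradient V y₀‖ ≤ P * G₁ / 2 * δt ^ 3 := by
      rw [norm_smul, Real.norm_eq_abs, abs_mul, abs_of_nonneg (by positivity : (0:ℝ) ≤ δt / 2)]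
      calc δt / 2 * |α₂ * δt ^ 2 + αt| * ‖gradient V y₀‖
          ≤ δt / 2 * (P * δt ^ 2) * G₁ := by
            refine mul_le_mul (mul_le_mul_of_nonneg_left hs1 (by positivity)) (hG₁ y₀)
              (norm_nonneg _) ?_
            exact mul_nonneg (by positivity) (mul_nonneg hPnn (by positivity))
        _ = P * G₁ / 2 * δt ^ 3 := by ring
    have m4 : ‖(δt / 2) • (fderiv ℝ (gradient V) y₀) (((1 + β₂ * δt ^ 2 + βt) • y₀
                + δt • A ((1 + α₂ * δt ^ 2 + αt) • x₀ - (δt / 2) • gradient V y₀)) - y₀ - δt • A x₀)‖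
        ≤ G₂ * W / 2 * δt ^ 3 := by
      rw [norm_smul, Real.norm_eq_abs, abs_of_nonneg (by positivity : (0:ℝ) ≤ δt / 2)]
      calc δt / 2 * ‖(fderiv ℝ (gradient V) y₀) (((1 + β₂ * δt ^ 2 + βt) • y₀
                + δt • A ((1 + α₂ * δt ^ 2 + αt) • x₀ - (δt / 2) • gradient V y₀)) - y₀ - δt • A x₀)‖
          ≤ δt / 2 * (G₂ * (W * δt ^ 2)) := by
            refine mul_le_mul_of_nonneg_left ?_ (by positivity)
            exact ((fderiv ℝ (gradient V) y₀).le_opNorm _).trans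
              (mul_le_mul (hG₂ y₀) hw (norm_nonneg _) hg2)
        _ = G₂ * W / 2 * δt ^ 3 := by ring
    have m5 : ‖(δt / 2) • (gradient V ((1 + β₂ * δt ^ 2 + βt) • y₀
                + δt • A ((1 + α₂ * δt ^ 2 + αt) • x₀ - (δt / 2) • gradient V y₀)) - gradient V y₀
          - (fderiv ℝ (gradient V) y₀) (((1 + β₂ * δt ^ 2 + βt) • y₀
                + δt • A ((1 + α₂ * δt ^ 2 + αt) • x₀ - (δt / 2) • gradient V y₀)) - y₀))‖
        ≤ G₃ * (C_M * |R| + W) ^ 2 / 2 * δt ^ 3 := by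
      rw [norm_smul, Real.norm_eq_abs, abs_of_nonneg (by positivity : (0:ℝ) ≤ δt / 2)]
      calc δt / 2 * ‖gradient V ((1 + β₂ * δt ^ 2 + βt) • y₀
                + δt • A ((1 + α₂ * δt ^ 2 + αt) • x₀ - (δt / 2) • gradient V y₀)) - gradient V y₀
            - (fderiv ℝ (gradient V) y₀) (((1 + β₂ * δt ^ 2 + βt) • y₀
                + δt • A ((1 + α₂ * δt ^ 2 + αt) • x₀ - (δt / 2) • gradient V y₀)) - y₀)‖
          ≤ δt / 2 * (G₃ * ((C_M * |R| + W) * δt) * ((C_M * |R| + W) * δt)) :=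
            mul_le_mul_of_nonneg_left hr (by positivity)
        _ = G₃ * (C_M * |R| + W) ^ 2 / 2 * δt ^ 3 := by ring
    have expand : (K1 + K2) * δt ^ 3 = K1 * δt ^ 3
        + ((G₃ * C_M ^ 2 * |R| ^ 2 + G₂ * C_M * G₁) * δt ^ 3
          + (2 * |C_α| + P ^ 2) * |R| * δt ^ 3
          + (P * G₁ / 2 * δt ^ 3 + G₂ * W / 2 * δt ^ 3
            + G₃ * (C_M * |R| + W) ^ 2 / 2 * δt ^ 3)) := by rw [hK2def]; ring
    have hK1t : 0 ≤ K1 * δt ^ 3 := mul_nonneg hK1nn (by positivity)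
    refine ((norm_add_le _ _).trans (add_le_add_left ((norm_add_le _ _).trans
      (add_le_add_left ((norm_add_le _ _).trans (add_le_add_left
      (norm_sub_le _ _) _)) _)) _)).trans ?_
    linarith [m1, m2, m3, m4, m5]
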